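/- Let A be the 2×2 complex matrix with A_{11} = 1, A_{12} = A_{21} = 1+i, A_{22} = 2, and let T = conj(A) ⊗ A be the order-4 dimension-2 tensor with entries T_{i_1i_2i_3i_4} = conj(A_{i_1i_2}) A_{i_3i_4}. Then T is conjugate partial-symmetric, the standard square matricization M(T) (the 4×4 matrix with rows indexed by (i_1,i_2) and columns by (i_3,i_4)) is a rank-one Hermitian matrix, but rank(T) ≥ 2. -/
import Mathlib


open scoped BigOperators
open ComplexConjugate

/-- Partial-symmetric tensor of order `2d`, dimension `n` (two-block index form). -/
def IsPS {n d : ℕ} (T : (Fin d → Fin n) → (Fin d → Fin n) → ℂ) : Prop :=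
  ∀ (σ τ : Equiv.Perm (Fin d)) (i j : Fin d → Fin n), T (i ∘ σ) (j ∘ τ) = T i j

/-- Conjugate partial-symmetric tensor. -/
def IsCPS {n d : ℕ} (T : (Fin d → Fin n) → (Fin d → Fin n) → ℂ) : Prop :=
  IsPS T ∧ ∀ i j, T i j = conj (T j i)

/-- The rank of `T`. -/
noncomputable def tRank {n d : ℕ} (T : (Fin d → Fin n) → (Fin d → Fin n) → ℂ) : ℕ :=
  sInf {r : ℕ | ∃ a b : Fin r → Fin d → Fin n → ℂ,
    ∀ i j, T i j = ∑ s, (∏ k, a s k (i k)) * ∏ k, b s k (j k)}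

/-- The matrix `A` with `A₁₁ = 1`, `A₁₂ = A₂₁ = 1 + i`, `A₂₂ = 2`. -/
def A13 : Matrix (Fin 2) (Fin 2) ℂ :=
  !![1, 1 + Complex.I; 1 + Complex.I, 2]

/-- The tensor `T = conj(A) ⊗ A`, with entries `T_{i₁i₂i₃i₄} = conj(A_{i₁i₂}) A_{i₃i₄}`. -/
def T13 : (Fin 2 → Fin 2) → (Fin 2 → Fin 2) → ℂ :=
  fun p q => conj (A13 (p 0) (p 1)) * A13 (q 0) (q 1)

/-- The standard square matricization `M(T)`: rows indexed by `(i₁,i₂)`, columns by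
`(i₃,i₄)`. -/
def M13 : Matrix (Fin 2 → Fin 2) (Fin 2 → Fin 2) ℂ :=
  Matrix.of fun p q => T13 p q

lemma Asymm13 (x y : Fin 2) : A13 x y = A13 y x := by
  fin_cases x <;> fin_cases y <;> rfl

lemma perm2_13 : ∀ σ : Equiv.Perm (Fin 2), (σ 0 = 0 ∧ σ 1 = 1) ∨ (σ 0 = 1 ∧ σ 1 = 0) := by
  decide

lemma Akey13 (σ : Equiv.Perm (Fin 2)) (p : Fin 2 → Fin 2) :
    A13 (p (σ 0)) (p (σ 1)) = A13 (p 0) (p 1) := by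
  rcases perm2_13 σ with ⟨h1, h2⟩ | ⟨h1, h2⟩ <;> rw [h1, h2]
  exact Asymm13 _ _

lemma fin2cases13 (x : Fin 2) : x = 0 ∨ x = 1 := by
  fin_cases x <;> simp

lemma decomp13 :
    ∃ a b : Fin 4 → Fin 2 → Fin 2 → ℂ,
      ∀ i j, T13 i j = ∑ s, (∏ k, a s k (i k)) * ∏ k, b s k (j k) := by
  refine ⟨fun s k i => if k = 0 then (if i = ![0,0,1,1] s then 1 else 0)
            else conj (A13 (![0,0,1,1] s) i),
          fun s k j => if k = 0 then (if j = ![0,1,0,1] s then 1 else 0)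
            else A13 (![0,1,0,1] s) j, ?_⟩
  intro i j
  rcases fin2cases13 (i 0) with h0 | h0 <;> rcases fin2cases13 (j 0) with h1 | h1 <;>
    simp [T13, Fin.sum_univ_four, Fin.prod_univ_two, h0, h1]

lemma key13 : ∀ r, r < 2 → ∀ a b : Fin r → Fin 2 → Fin 2 → ℂ,
    ¬ (∀ i j, T13 i j = ∑ s, (∏ k, a s k (i k)) * ∏ k, b s k (j k)) := by
  intro r hr a b h
  interval_cases r
  · have := h ![0, 0] ![0, 0]
    simp [T13, A13] at this
  · have e : T13 ![0,0] ![0,0] * T13 ![1,1] ![0,0] = T13 ![0,1] ![0,0] * T13 ![1,0] ![0,0] := by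
      rw [h ![0,0] ![0,0], h ![1,1] ![0,0], h ![0,1] ![0,0], h ![1,0] ![0,0]]
      simp only [Fin.sum_univ_one, Fin.prod_univ_two, Matrix.cons_val_zero,
        Matrix.cons_val_one, Matrix.head_cons]
      ring
    have t1 : T13 ![0,0] ![0,0] = 1 := by norm_num [T13, A13]
    have t2 : T13 ![1,1] ![0,0] = 2 := by norm_num [T13, A13, Complex.conj_ofNat]
    have t3 : T13 ![0,1] ![0,0] = 1 - Complex.I := by
      simp [T13, A13, map_add, Complex.conj_I]; ring
    have t4 : T13 ![1,0] ![0,0] = 1 - Complex.I := by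
      simp [T13, A13, map_add, Complex.conj_I]; ring
    rw [t1, t2, t3, t4] at e
    ring_nf at e
    rw [Complex.I_sq] at e
    simp [Complex.ext_iff] at e
    try norm_num at e

/-- `T13` is CPS, its standard square matricization is a rank-one Hermitian matrix,
but `rank(T13) ≥ 2`. -/
theorem stmt13 : IsCPS T13 ∧ M13.IsHermitian ∧ M13.rank = 1 ∧ 2 ≤ tRank T13 := by
  have hconj : ∀ i j, T13 i j = conj (T13 j i) := by
    intro i j
    simp only [T13, map_mul, Complex.conj_conj]
    ring
  refine ⟨⟨?_, hconj⟩, ?_, ?_, ?_⟩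
  · intro σ τ i j
    show conj (A13 (i (σ 0)) (i (σ 1))) * A13 (j (τ 0)) (j (τ 1)) = _
    rw [Akey13 σ i, Akey13 τ j]
    rfl
  · ext p q
    rw [Matrix.conjTranspose_apply]
    exact ((hconj p q).symm : _)
  · -- rank of M13
    have hle : M13.rank ≤ 1 := by
      have huv : M13 = (Matrix.of fun p (_ : Fin 1) => conj (A13 (p 0) (p 1))) *
          (Matrix.of fun (_ : Fin 1) q => A13 (q 0) (q 1)) := by
        ext p q
        simp [Matrix.mul_apply, M13, T13]
      have hv : (Matrix.of fun (_ : Fin 1) q => A13 (q 0) (q 1) :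
          Matrix (Fin 1) (Fin 2 → Fin 2) ℂ).rank ≤ 1 := by
        simpa using Matrix.rank_le_card_height
          (Matrix.of fun (_ : Fin 1) (q : Fin 2 → Fin 2) => A13 (q 0) (q 1))
      rw [huv]
      exact le_trans (Matrix.rank_mul_le_right _ _) hv
    have hpos : 0 < M13.rank := by
      rw [Matrix.rank, Module.finrank_pos_iff_exists_ne_zero]
      refine ⟨⟨M13.mulVecLin (fun q => if q = ![0,0] then 1 else 0),
        LinearMap.mem_range_self _ _⟩, ?_⟩
      simp only [ne_eq, Submodule.mk_eq_zero]
      intro hz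
      have := congrFun hz ![0,0]
      simp [Matrix.mulVecLin_apply, Matrix.mulVec, dotProduct, mul_ite, M13, T13, A13] at this
    omega
  · by_contra hlt
    push_neg at hlt
    obtain ⟨a4, b4, h4⟩ := decomp13
    have hm : tRank T13 ∈ {r : ℕ | ∃ a b : Fin r → Fin 2 → Fin 2 → ℂ,
        ∀ i j, T13 i j = ∑ s, (∏ k, a s k (i k)) * ∏ k, b s k (j k)} :=
      Nat.sInf_mem ⟨4, a4, b4, h4⟩
    obtain ⟨a, b, hab⟩ := hm
    exact key13 _ hlt a b hab
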